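/- (Bypassing simplification) Let G = {G_1,...,G_n} with n ≥ 1. Suppose G_1 ≡ {*L} and every option G_j = {G_{j1},...,G_{jm}} of G has some option G_{jℓ} with G_{jℓ} ≡ *L. Then G ≡ *L. The analogous statement holds with *L replaced throughout by *R. -/

import Mathlib

/-- Positions of LR-ending partisan games: two terminals and finite option sets
(represented as lists; set-like behavior is captured by the `Iso` relation). -/
inductive Pos : Type
  | termL : Pos
  | termR : Pos
  | opts : List Pos → Pos

namespace Pos

/-- Valid positions: every non-terminal position has a nonempty set of options. -/
inductive Valid : Pos → Prop
  | termL : Valid termL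
  | termR : Valid termR
  | opts : ∀ gs : List Pos, gs ≠ [] → (∀ g ∈ gs, Valid g) → Valid (opts gs)

/-- Disjunctive sum. -/
def sum : Pos → Pos → Pos
  | termL, termL => termL
  | termL, termR => termR
  | termR, termL => termR
  | termR, termR => termL
  | termL, opts hs => opts (hs.attach.map (fun h => sum termL h.1))
  | termR, opts hs => opts (hs.attach.map (fun h => sum termR h.1))
  | opts gs, termL => opts (gs.attach.map (fun g => sum g.1 termL))
  | opts gs, termR => opts (gs.attach.map (fun g => sum g.1 termR))
  | opts gs, opts hs =>
      opts (gs.attach.map (fun g => sum g.1 (opts hs)) ++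
            hs.attach.map (fun h => sum (opts gs) h.1))
termination_by g h => sizeOf g + sizeOf h
decreasing_by
  all_goals
    first
      | (have := List.sizeOf_lt_of_mem h.2; simp_all; omega)
      | (have := List.sizeOf_lt_of_mem g.2; simp_all; omega)

/-- Conjugate: swap the two kinds of terminal positions. -/
def conj : Pos → Pos
  | termL => termR
  | termR => termL
  | opts gs => opts (gs.attach.map (fun g => conj g.1))
decreasing_by
  have := List.sizeOf_lt_of_mem g.2; simp_all; omega

/-- Isomorphism of game trees (positions viewed as sets of options). -/
def Iso : Pos → Pos → Prop
  | termL, termL => True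
  | termR, termR => True
  | opts gs, opts hs =>
      (∀ g ∈ gs.attach, ∃ h ∈ hs.attach, Iso g.1 h.1) ∧
      (∀ h ∈ hs.attach, ∃ g ∈ gs.attach, Iso g.1 h.1)
  | _, _ => False
termination_by g h => sizeOf g + sizeOf h
decreasing_by
  all_goals
    (have hg := List.sizeOf_lt_of_mem g.2; have hh := List.sizeOf_lt_of_mem h.2;
     simp_all; omega)

inductive Player : Type
  | left : Player
  | right : Player
  deriving DecidableEq

/-- `Wins p b G` : player `p` has a winning strategy from position `G`,
where `b = true` means it is `p`'s turn to move and `b = false` means the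
opponent is to move.  A terminal position is won by the player given by
its label, regardless of whose turn it is. -/
inductive Wins : Player → Bool → Pos → Prop
  | termL : ∀ b, Wins Player.left b termL
  | termR : ∀ b, Wins Player.right b termR
  | move : ∀ (p : Player) (gs : List Pos) (g : Pos), g ∈ gs →
      Wins p false g → Wins p true (opts gs)
  | wait : ∀ (p : Player) (gs : List Pos),
      (∀ g, g ∈ gs → Wins p true g) → Wins p false (opts gs)

inductive Outcome : Type
  | L : Outcome
  | R : Outcome
  | N : Outcome
  | P : Outcome
  deriving DecidableEq

/-- The outcome of a position. -/
noncomputable def outcome (G : Pos) : Outcome := by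
  classical
  exact
    if Wins Player.left true G then
      if Wins Player.left false G then Outcome.L else Outcome.N
    else
      if Wins Player.left false G then Outcome.P else Outcome.R

/-- Equivalence of positions: the outcome agrees in every (valid) context. -/
def equiv (G H : Pos) : Prop :=
  ∀ X : Pos, Valid X → outcome (sum G X) = outcome (sum H X)

end Pos

namespace Pos

lemma strong_ind (P : Pos → Prop)
    (h : ∀ X, (∀ Y : Pos, sizeOf Y < sizeOf X → P Y) → P X) : ∀ X, P X := by
  have key : ∀ n X, sizeOf X < n → P X := by
    intro n
    induction n with
    | zero => intro X hX; omega
    | succ n ih => intro X _; exact h X (fun Y hY => ih Y (by omega))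
  exact fun X => key (sizeOf X + 1) X (by omega)

lemma sizeOf_lt_opts {x : Pos} {xs : List Pos} (h : x ∈ xs) :
    sizeOf x < sizeOf (opts xs) := by
  have := List.sizeOf_lt_of_mem h
  simp only [opts.sizeOf_spec]
  omega

lemma sum_opts_opts (gs xs : List Pos) :
    sum (opts gs) (opts xs) =
      opts (gs.map (fun g => sum g (opts xs)) ++ xs.map (fun x => sum (opts gs) x)) := by
  rw [sum]
  simp [List.attach_map_val]

lemma sum_opts_termL (gs : List Pos) :
    sum (opts gs) termL = opts (gs.map (fun g => sum g termL)) := by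
  rw [sum]; simp [List.attach_map_val]

lemma sum_opts_termR (gs : List Pos) :
    sum (opts gs) termR = opts (gs.map (fun g => sum g termR)) := by
  rw [sum]; simp [List.attach_map_val]

lemma sum_termL_opts (xs : List Pos) :
    sum termL (opts xs) = opts (xs.map (fun x => sum termL x)) := by
  rw [sum]; simp [List.attach_map_val]

lemma sum_termR_opts (xs : List Pos) :
    sum termR (opts xs) = opts (xs.map (fun x => sum termR x)) := by
  rw [sum]; simp [List.attach_map_val]

def other : Player → Player
  | .left => .right
  | .right => .left

@[simp] lemma other_other (p : Player) : other (other p) = p := by cases p <;> rfl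

lemma wins_true_opts_iff {p : Player} {gs : List Pos} :
    Wins p true (opts gs) ↔ ∃ g ∈ gs, Wins p false g := by
  constructor
  · intro h; cases h with | move _ _ g hg hw => exact ⟨g, hg, hw⟩
  · rintro ⟨g, hg, hw⟩; exact .move p gs g hg hw

lemma wins_false_opts_iff {p : Player} {gs : List Pos} :
    Wins p false (opts gs) ↔ ∀ g ∈ gs, Wins p true g := by
  constructor
  · intro h; cases h with | wait _ _ hw => exact hw
  · exact fun hw => .wait p gs hw

lemma wins_termL_iff {p : Player} {b : Bool} : Wins p b termL ↔ p = .left := by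
  constructor
  · intro h; cases h; rfl
  · rintro rfl; exact .termL b

lemma wins_termR_iff {p : Player} {b : Bool} : Wins p b termR ↔ p = .right := by
  constructor
  · intro h; cases h; rfl
  · rintro rfl; exact .termR b

lemma wins_iff_not : ∀ X : Pos, ∀ (p : Player) (b : Bool),
    Wins p b X ↔ ¬ Wins (other p) (!b) X := by
  refine strong_ind _ ?_
  intro X ih p b
  match X with
  | termL =>
    rw [wins_termL_iff, wins_termL_iff]
    cases p <;> simp [other]
  | termR =>
    rw [wins_termR_iff, wins_termR_iff]
    cases p <;> simp [other]
  | opts gs =>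
    cases b with
    | true =>
      rw [wins_true_opts_iff]
      show _ ↔ ¬ Wins (other p) false _
      rw [wins_false_opts_iff]
      push_neg
      constructor
      · rintro ⟨g, hg, hw⟩
        refine ⟨g, hg, ?_⟩
        rw [ih g (sizeOf_lt_opts hg) p false] at hw
        simpa using hw
      · rintro ⟨g, hg, hw⟩
        refine ⟨g, hg, ?_⟩
        rw [ih g (sizeOf_lt_opts hg) p false]
        simpa using hw
    | false =>
      rw [wins_false_opts_iff]
      show _ ↔ ¬ Wins (other p) true _
      rw [wins_true_opts_iff]
      push_neg
      constructor
      · intro hw g hg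
        have := hw g hg
        rw [ih g (sizeOf_lt_opts hg) p true] at this
        simpa using this
      · intro hw g hg
        rw [ih g (sizeOf_lt_opts hg) p true]
        simpa using hw g hg

lemma wins_of_outcome_eq {Y Z : Pos} (h : outcome Y = outcome Z) :
    ∀ (p : Player) (b : Bool), Wins p b Y ↔ Wins p b Z := by
  have hl : ∀ b, Wins Player.left b Y ↔ Wins Player.left b Z := by
    unfold outcome at h
    split_ifs at h <;> intro b <;> cases b <;> simp_all
  intro p b
  cases p with
  | left => exact hl b
  | right =>
    rw [wins_iff_not Y, wins_iff_not Z]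
    simp only [other]
    rw [hl]

end Pos

namespace Pos

lemma valid_mem {gs : List Pos} {g : Pos} (h : Valid (opts gs)) (hg : g ∈ gs) : Valid g := by
  cases h with | opts _ _ hv => exact hv g hg

lemma wins_term_any {X : Pos} (hX : X = termL ∨ X = termR) {p : Player} {b b' : Bool}
    (h : Wins p b X) : Wins p b' X := by
  rcases hX with rfl | rfl
  · exact wins_termL_iff.2 (wins_termL_iff.1 h)
  · exact wins_termR_iff.2 (wins_termR_iff.1 h)

lemma sum_term_term {t X : Pos} (ht : t = termL ∨ t = termR) (hX : X = termL ∨ X = termR) :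
    sum t X = termL ∨ sum t X = termR := by
  rcases ht with rfl | rfl <;> rcases hX with rfl | rfl <;> simp [sum]

lemma sum_term_opts {t : Pos} (ht : t = termL ∨ t = termR) (xs : List Pos) :
    sum t (opts xs) = opts (xs.map (fun x => sum t x)) := by
  rcases ht with rfl | rfl
  exacts [sum_termL_opts xs, sum_termR_opts xs]

lemma sum_opts_term {t : Pos} (ht : t = termL ∨ t = termR) (gs : List Pos) :
    sum (opts gs) t = opts (gs.map (fun g => sum g t)) := by
  rcases ht with rfl | rfl
  exacts [sum_opts_termL gs, sum_opts_termR gs]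

lemma valid_term {X : Pos} (hX : X = termL ∨ X = termR) : Valid X := by
  rcases hX with rfl | rfl
  exacts [Valid.termL, Valid.termR]

lemma forward (t : Pos) (ht : t = termL ∨ t = termR)
    (Gs : List Pos) (hhead : ∃ G1 ∈ Gs, equiv G1 (opts [t]))
    (hopt : ∀ Gj ∈ Gs, ∃ js, Gj = opts js ∧ ∃ g ∈ js, equiv g t) :
    ∀ X, Valid X → ∀ (p : Player) (b : Bool),
      Wins p b (sum t X) → Wins p b (sum (opts Gs) X) := by
  refine strong_ind (fun X => Valid X → ∀ (p : Player) (b : Bool),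
      Wins p b (sum t X) → Wins p b (sum (opts Gs) X)) ?_
  intro X ih hX p b hw
  by_cases hXt : X = termL ∨ X = termR
  · -- X terminal
    have hu : ∀ b', Wins p b' (sum t X) := fun b' =>
      wins_term_any (sum_term_term ht hXt) hw
    rw [sum_opts_term hXt Gs]
    cases b with
    | true =>
      obtain ⟨G1, hmem, heq⟩ := hhead
      refine Wins.move p _ (sum G1 X) (List.mem_map_of_mem hmem) ?_
      have houtc := heq X hX
      rw [wins_of_outcome_eq houtc p false]
      have : sum (opts [t]) X = opts [sum t X] := by
        rw [sum_opts_term hXt [t]]; rfl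
      rw [this, wins_false_opts_iff]
      intro g hg
      rw [List.mem_singleton] at hg
      subst hg
      exact hu true
    | false =>
      rw [wins_false_opts_iff]
      intro Y hY
      rw [List.mem_map] at hY
      obtain ⟨Gj, hGj, rfl⟩ := hY
      obtain ⟨js, rfl, g, hgmem, hgeq⟩ := hopt Gj hGj
      rw [sum_opts_term hXt js]
      refine Wins.move p _ (sum g X) (List.mem_map_of_mem hgmem) ?_
      rw [wins_of_outcome_eq (hgeq X hX) p false]
      exact hu false
  · -- X = opts xs
    obtain ⟨xs, rfl⟩ : ∃ xs, X = opts xs := by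
      cases X
      · exact absurd (Or.inl rfl) hXt
      · exact absurd (Or.inr rfl) hXt
      · exact ⟨_, rfl⟩
    have hst : sum t (opts xs) = opts (xs.map (fun x => sum t x)) := sum_term_opts ht xs
    rw [sum_opts_opts]
    cases b with
    | true =>
      rw [hst, wins_true_opts_iff] at hw
      obtain ⟨y, hy, hwy⟩ := hw
      rw [List.mem_map] at hy
      obtain ⟨x, hx, rfl⟩ := hy
      refine Wins.move p _ (sum (opts Gs) x)
        (List.mem_append_right _ (List.mem_map_of_mem hx)) ?_
      exact ih x (sizeOf_lt_opts hx) (valid_mem hX hx) p false hwy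
    | false =>
      have hw0 := hw
      rw [hst, wins_false_opts_iff] at hw
      rw [wins_false_opts_iff]
      intro Y hY
      rw [List.mem_append] at hY
      rcases hY with hY | hY <;> rw [List.mem_map] at hY
      · obtain ⟨Gj, hGj, rfl⟩ := hY
        obtain ⟨js, rfl, g, hgmem, hgeq⟩ := hopt Gj hGj
        rw [sum_opts_opts]
        refine Wins.move p _ (sum g (opts xs))
          (List.mem_append_left _ (List.mem_map_of_mem hgmem)) ?_
        rw [wins_of_outcome_eq (hgeq (opts xs) hX) p false]
        exact hw0
      · obtain ⟨x, hx, rfl⟩ := hY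
        exact ih x (sizeOf_lt_opts hx) (valid_mem hX hx) p true
          (hw _ (List.mem_map_of_mem hx))

lemma main_iff (t : Pos) (ht : t = termL ∨ t = termR)
    (Gs : List Pos) (hhead : ∃ G1 ∈ Gs, equiv G1 (opts [t]))
    (hopt : ∀ Gj ∈ Gs, ∃ js, Gj = opts js ∧ ∃ g ∈ js, equiv g t)
    (X : Pos) (hX : Valid X) (p : Player) (b : Bool) :
    Wins p b (sum (opts Gs) X) ↔ Wins p b (sum t X) := by
  constructor
  · intro h
    by_contra hc
    rw [wins_iff_not] at hc
    push_neg at hc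
    have := forward t ht Gs hhead hopt X hX (other p) (!b) hc
    rw [wins_iff_not] at this
    simp only [other_other, Bool.not_not] at this
    exact this h
  · exact forward t ht Gs hhead hopt X hX p b

lemma main_equiv (t : Pos) (ht : t = termL ∨ t = termR)
    (Gs : List Pos) (hhead : ∃ G1 ∈ Gs, equiv G1 (opts [t]))
    (hopt : ∀ Gj ∈ Gs, ∃ js, Gj = opts js ∧ ∃ g ∈ js, equiv g t) :
    equiv (opts Gs) t := by
  intro X hX
  have h1 := main_iff t ht Gs hhead hopt X hX Player.left true
  have h2 := main_iff t ht Gs hhead hopt X hX Player.left false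
  unfold outcome
  split_ifs <;> simp_all

end Pos

/-- bypassing simplification: if `G = {G_1,...,G_n}` with
`G_1 ≡ {*L}` and every option `G_j` of `G` has an option `≡ *L`, then `G ≡ *L`;
and the analogous statement with `*L` replaced by `*R`. -/
theorem bypass_simplification :
    (∀ (G1 : Pos) (rest : List Pos), (Pos.opts (G1 :: rest)).Valid →
      Pos.equiv G1 (Pos.opts [Pos.termL]) →
      (∀ Gj ∈ G1 :: rest, ∃ js : List Pos, Gj = Pos.opts js ∧
        ∃ g ∈ js, Pos.equiv g Pos.termL) →
      Pos.equiv (Pos.opts (G1 :: rest)) Pos.termL) ∧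
    (∀ (G1 : Pos) (rest : List Pos), (Pos.opts (G1 :: rest)).Valid →
      Pos.equiv G1 (Pos.opts [Pos.termR]) →
      (∀ Gj ∈ G1 :: rest, ∃ js : List Pos, Gj = Pos.opts js ∧
        ∃ g ∈ js, Pos.equiv g Pos.termR) →
      Pos.equiv (Pos.opts (G1 :: rest)) Pos.termR) := by 
  constructor
  · intro G1 rest _ hG1 hopt
    exact Pos.main_equiv Pos.termL (Or.inl rfl) (G1 :: rest)
      ⟨G1, List.mem_cons_self, hG1⟩ hopt
  · intro G1 rest _ hG1 hopt
    exact Pos.main_equiv Pos.termR (Or.inr rfl) (G1 :: rest)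
      ⟨G1, List.mem_cons_self, hG1⟩ hopt
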